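/- For l ≥ 1, (1/(l+1)) ∑_{k=0}^{l} cot((2k+1)π/(4(l+1))) is asymptotically equivalent to (2/π) ln(l+1) as l → ∞, i.e. the ratio of the two quantities tends to 1. -/

import Mathlib

open Real Finset Filter

noncomputable def oddHarm (n : ℕ) : ℝ := ∑ k ∈ Finset.range n, 1 / (2 * (k : ℝ) + 1)

lemma oddHarm_lower (n : ℕ) : (1 / 2) * Real.log (2 * (n : ℝ) + 1) ≤ oddHarm n := by
  induction n with
  | zero => simp [oddHarm]
  | succ n ih =>
    have h1 : (0 : ℝ) < 2 * n + 1 := by positivity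
    have key : Real.log (2 * (n : ℝ) + 3) - Real.log (2 * (n : ℝ) + 1) ≤ 2 / (2 * n + 1) := by
      rw [← Real.log_div (by positivity) (ne_of_gt h1)]
      have h2 := Real.log_le_sub_one_of_pos (x := (2 * (n : ℝ) + 3) / (2 * n + 1)) (by positivity)
      have e : (2 * (n : ℝ) + 3) / (2 * n + 1) - 1 = 2 / (2 * n + 1) := by
        field_simp
        norm_num
      linarith
    have hrec : oddHarm (n + 1) = oddHarm n + 1 / (2 * (n : ℝ) + 1) := by
      simp [oddHarm, Finset.sum_range_succ]
    rw [hrec]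
    push_cast
    have e2 : 2 * ((n : ℝ) + 1) + 1 = 2 * (n : ℝ) + 3 := by ring
    rw [e2]
    have h3 : 1 / (2 * (n : ℝ) + 1) = (1/2) * (2 / (2 * n + 1)) := by ring
    linarith

lemma oddHarm_upper (n : ℕ) : oddHarm (n + 1) ≤ 1 + (1 / 2) * Real.log (2 * (n : ℝ) + 1) := by
  induction n with
  | zero => simp [oddHarm]
  | succ n ih =>
    have h1 : (0 : ℝ) < 2 * n + 1 := by positivity
    have h3 : (0 : ℝ) < 2 * n + 3 := by positivity
    have key : 2 / (2 * (n : ℝ) + 3) ≤ Real.log (2 * (n : ℝ) + 3) - Real.log (2 * (n : ℝ) + 1) := by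
      rw [← Real.log_div (ne_of_gt h3) (ne_of_gt h1)]
      have h2 := Real.one_sub_inv_le_log_of_pos (x := (2 * (n : ℝ) + 3) / (2 * n + 1)) (by positivity)
      have e : 1 - ((2 * (n : ℝ) + 3) / (2 * n + 1))⁻¹ = 2 / (2 * n + 3) := by
        rw [inv_div]
        field_simp
        norm_num
      linarith
    have hrec : oddHarm (n + 2) = oddHarm (n + 1) + 1 / (2 * ((n : ℝ) + 1) + 1) := by
      simp [oddHarm, Finset.sum_range_succ]
    rw [hrec]
    push_cast
    have e2 : 2 * ((n : ℝ) + 1) + 1 = 2 * (n : ℝ) + 3 := by ring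
    rw [e2]
    have h4 : 1 / (2 * (n : ℝ) + 3) = (1/2) * (2 / (2 * n + 3)) := by ring
    linarith

lemma cot_le_inv {θ : ℝ} (h0 : 0 < θ) (h2 : θ < π / 2) :
    Real.cos θ / Real.sin θ ≤ 1 / θ := by
  have hs : 0 < Real.sin θ := Real.sin_pos_of_pos_of_lt_pi h0 (by linarith [Real.pi_pos])
  have hc : 0 < Real.cos θ := Real.cos_pos_of_mem_Ioo ⟨by linarith [Real.pi_pos], h2⟩
  have ht := Real.lt_tan h0 h2
  rw [Real.tan_eq_sin_div_cos, lt_div_iff₀ hc] at ht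
  rw [div_le_div_iff₀ hs h0]
  nlinarith

lemma inv_sub_le_cot {θ : ℝ} (h0 : 0 < θ) (h2 : θ < π / 2) :
    1 / θ - θ ≤ Real.cos θ / Real.sin θ := by
  have hs : 0 < Real.sin θ := Real.sin_pos_of_pos_of_lt_pi h0 (by linarith [Real.pi_pos])
  have hc : 0 < Real.cos θ := Real.cos_pos_of_mem_Ioo ⟨by linarith [Real.pi_pos], h2⟩
  rcases le_or_gt θ 1 with h1 | h1
  · have key : (1 - θ ^ 2) * Real.sin θ ≤ θ * Real.cos θ := by
      have hsle : Real.sin θ ≤ θ := Real.sin_le h0.le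
      have hcge : 1 - θ ^ 2 / 2 ≤ Real.cos θ := Real.one_sub_sq_div_two_le_cos
      nlinarith [sq_nonneg θ, h0.le, hs.le]
    have e : 1 / θ - θ = (1 - θ ^ 2) / θ := by field_simp
    rw [e, div_le_div_iff₀ h0 hs]
    linarith
  · have : 1 / θ - θ ≤ 0 := by
      have : 1 / θ ≤ 1 := by rw [div_le_one h0]; linarith
      linarith
    exact this.trans (div_nonneg hc.le hs.le)

lemma tendsto_div_log (c : ℝ) :
    Tendsto (fun l : ℕ => c / Real.log ((l : ℝ) + 1)) atTop (nhds 0) := by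
  have h : Tendsto (fun l : ℕ => Real.log ((l : ℝ) + 1)) atTop atTop :=
    Real.tendsto_log_atTop.comp (tendsto_atTop_add_const_right atTop 1 tendsto_natCast_atTop_atTop)
  have := h.inv_tendsto_atTop.const_mul c
  simpa [div_eq_mul_inv] using this

lemma mainSum_bounds (l : ℕ) (hl : 2 ≤ l) :
    (2 / π) * Real.log ((l : ℝ) + 1) - π / 2 ≤
      (1 / ((l : ℝ) + 1)) *
        ∑ k ∈ Finset.range (l + 1),
          Real.cos ((2 * (k : ℝ) + 1) * π / (4 * ((l : ℝ) + 1))) /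
            Real.sin ((2 * (k : ℝ) + 1) * π / (4 * ((l : ℝ) + 1))) ∧
    (1 / ((l : ℝ) + 1)) *
        ∑ k ∈ Finset.range (l + 1),
          Real.cos ((2 * (k : ℝ) + 1) * π / (4 * ((l : ℝ) + 1))) /
            Real.sin ((2 * (k : ℝ) + 1) * π / (4 * ((l : ℝ) + 1))) ≤
      (2 / π) * Real.log ((l : ℝ) + 1) + (4 / π + (2 / π) * Real.log 2) := by
  have hpi := Real.pi_pos
  have hpine := Real.pi_ne_zero
  have hn0 : ((l : ℝ) + 1) ≠ 0 := by positivity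
  set L := Real.log ((l : ℝ) + 1) with hLdef
  -- θ bounds
  have hθ : ∀ k ∈ Finset.range (l + 1),
      0 < (2 * (k : ℝ) + 1) * π / (4 * ((l : ℝ) + 1)) ∧
      (2 * (k : ℝ) + 1) * π / (4 * ((l : ℝ) + 1)) < π / 2 := by
    intro k hk
    have hkl : (k : ℝ) ≤ l := by
      exact_mod_cast Nat.lt_succ_iff.mp (Finset.mem_range.mp hk)
    constructor
    · positivity
    · rw [div_lt_iff₀ (by positivity)]
      nlinarith
  have hup : ∑ k ∈ Finset.range (l + 1),
      Real.cos ((2 * (k : ℝ) + 1) * π / (4 * ((l : ℝ) + 1))) /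
        Real.sin ((2 * (k : ℝ) + 1) * π / (4 * ((l : ℝ) + 1))) ≤
      ∑ k ∈ Finset.range (l + 1), 1 / ((2 * (k : ℝ) + 1) * π / (4 * ((l : ℝ) + 1))) :=
    Finset.sum_le_sum fun k hk => cot_le_inv (hθ k hk).1 (hθ k hk).2
  have hlow : ∑ k ∈ Finset.range (l + 1),
      (1 / ((2 * (k : ℝ) + 1) * π / (4 * ((l : ℝ) + 1))) -
        (2 * (k : ℝ) + 1) * π / (4 * ((l : ℝ) + 1))) ≤
      ∑ k ∈ Finset.range (l + 1),
      Real.cos ((2 * (k : ℝ) + 1) * π / (4 * ((l : ℝ) + 1))) /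
        Real.sin ((2 * (k : ℝ) + 1) * π / (4 * ((l : ℝ) + 1))) :=
    Finset.sum_le_sum fun k hk => inv_sub_le_cot (hθ k hk).1 (hθ k hk).2
  have hinv : ∑ k ∈ Finset.range (l + 1), 1 / ((2 * (k : ℝ) + 1) * π / (4 * ((l : ℝ) + 1))) =
      (4 * ((l : ℝ) + 1) / π) * oddHarm (l + 1) := by
    rw [oddHarm, Finset.mul_sum]
    refine Finset.sum_congr rfl fun k _ => ?_
    have hk0 : (2 * (k : ℝ) + 1) ≠ 0 := by positivity
    field_simp
  have hθsum : ∑ k ∈ Finset.range (l + 1),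
      (2 * (k : ℝ) + 1) * π / (4 * ((l : ℝ) + 1)) ≤ ((l : ℝ) + 1) * (π / 2) := by
    have := Finset.sum_le_card_nsmul (Finset.range (l + 1))
      (fun k => (2 * (k : ℝ) + 1) * π / (4 * ((l : ℝ) + 1))) (π / 2)
      (fun k hk => ((hθ k hk).2).le)
    simpa [Finset.card_range, nsmul_eq_mul, add_comm] using this
  -- oddHarm bounds
  have hA_low : (1 / 2) * L ≤ oddHarm (l + 1) := by
    have h1 := oddHarm_lower (l + 1)
    have h2 : L ≤ Real.log (2 * ((l : ℝ) + 1) + 1) :=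
      Real.log_le_log (by positivity) (by linarith)
    push_cast at h1
    linarith
  have hA_up : oddHarm (l + 1) ≤ 1 + (1 / 2) * Real.log 2 + (1 / 2) * L := by
    have h1 := oddHarm_upper l
    have h2 : Real.log (2 * (l : ℝ) + 1) ≤ Real.log 2 + L := by
      have h3 : Real.log (2 * (l : ℝ) + 1) ≤ Real.log (2 * ((l : ℝ) + 1)) :=
        Real.log_le_log (by positivity) (by linarith)
      rw [Real.log_mul two_ne_zero hn0] at h3
      linarith
    linarith
  -- S bounds
  rw [Finset.sum_sub_distrib, hinv] at hlow
  rw [hinv] at hup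
  constructor
  · have e1 : (1 / ((l : ℝ) + 1)) * ((4 * ((l : ℝ) + 1) / π) * oddHarm (l + 1) -
        ((l : ℝ) + 1) * (π / 2)) = (4 / π) * oddHarm (l + 1) - π / 2 := by
      field_simp
    have hS : (4 * ((l : ℝ) + 1) / π) * oddHarm (l + 1) - ((l : ℝ) + 1) * (π / 2) ≤
        ∑ k ∈ Finset.range (l + 1),
          Real.cos ((2 * (k : ℝ) + 1) * π / (4 * ((l : ℝ) + 1))) /
            Real.sin ((2 * (k : ℝ) + 1) * π / (4 * ((l : ℝ) + 1))) := by linarith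
    have h2 := mul_le_mul_of_nonneg_left hS
      (by positivity : (0:ℝ) ≤ 1 / ((l : ℝ) + 1))
    rw [e1] at h2
    have h3 := mul_le_mul_of_nonneg_left hA_low (by positivity : (0:ℝ) ≤ 4 / π)
    have e3 : (4 / π) * ((1 / 2) * L) = (2 / π) * L := by ring
    linarith
  · have e1 : (1 / ((l : ℝ) + 1)) * ((4 * ((l : ℝ) + 1) / π) * oddHarm (l + 1)) =
        (4 / π) * oddHarm (l + 1) := by
      field_simp
    have h2 := mul_le_mul_of_nonneg_left hup
      (by positivity : (0:ℝ) ≤ 1 / ((l : ℝ) + 1))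
    rw [e1] at h2
    have h3 := mul_le_mul_of_nonneg_left hA_up (by positivity : (0:ℝ) ≤ 4 / π)
    have e3 : (4 / π) * (1 + (1 / 2) * Real.log 2 + (1 / 2) * L) =
        (2 / π) * L + (4 / π + (2 / π) * Real.log 2) := by ring
    linarith

theorem lebesgue_constant_asymptotics :
    Tendsto
      (fun l : ℕ =>
        ((1 / ((l : ℝ) + 1)) *
            ∑ k ∈ Finset.range (l + 1),
              Real.cos ((2 * (k : ℝ) + 1) * π / (4 * ((l : ℝ) + 1))) /
                Real.sin ((2 * (k : ℝ) + 1) * π / (4 * ((l : ℝ) + 1)))) /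
          ((2 / π) * Real.log ((l : ℝ) + 1)))
      atTop (nhds 1) := by
  have hpi := Real.pi_pos
  have hpine := Real.pi_ne_zero
  apply tendsto_of_tendsto_of_tendsto_of_le_of_le'
    (g := fun l : ℕ => 1 - (π ^ 2 / 4) / Real.log ((l : ℝ) + 1))
    (h := fun l : ℕ => 1 + (2 + Real.log 2) / Real.log ((l : ℝ) + 1))
  · simpa using tendsto_const_nhds.sub (tendsto_div_log (π ^ 2 / 4))
  · simpa using tendsto_const_nhds.add (tendsto_div_log (2 + Real.log 2))
  · filter_upwards [eventually_ge_atTop 2] with l hl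
    obtain ⟨hlo, -⟩ := mainSum_bounds l hl
    have hl3 : (3 : ℝ) ≤ (l : ℝ) + 1 := by
      have : (2 : ℝ) ≤ (l : ℝ) := by exact_mod_cast hl
      linarith
    have hL1 : 1 ≤ Real.log ((l : ℝ) + 1) := by
      have h1 : Real.log 3 ≤ Real.log ((l : ℝ) + 1) := Real.log_le_log (by norm_num) hl3
      have h2 : (1 : ℝ) ≤ Real.log 3 := by
        rw [Real.le_log_iff_exp_le (by norm_num)]
        have := Real.exp_one_lt_d9
        linarith
      linarith
    have hL0 : (0 : ℝ) < Real.log ((l : ℝ) + 1) := by linarith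
    have hD : (0 : ℝ) < (2 / π) * Real.log ((l : ℝ) + 1) := by positivity
    rw [le_div_iff₀ hD]
    have e : (1 - (π ^ 2 / 4) / Real.log ((l : ℝ) + 1)) * ((2 / π) * Real.log ((l : ℝ) + 1)) =
        (2 / π) * Real.log ((l : ℝ) + 1) - π / 2 := by
      field_simp
      ring
    linarith
  · filter_upwards [eventually_ge_atTop 2] with l hl
    obtain ⟨-, hhi⟩ := mainSum_bounds l hl
    have hl3 : (3 : ℝ) ≤ (l : ℝ) + 1 := by
      have : (2 : ℝ) ≤ (l : ℝ) := by exact_mod_cast hl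
      linarith
    have hL1 : 1 ≤ Real.log ((l : ℝ) + 1) := by
      have h1 : Real.log 3 ≤ Real.log ((l : ℝ) + 1) := Real.log_le_log (by norm_num) hl3
      have h2 : (1 : ℝ) ≤ Real.log 3 := by
        rw [Real.le_log_iff_exp_le (by norm_num)]
        have := Real.exp_one_lt_d9
        linarith
      linarith
    have hL0 : (0 : ℝ) < Real.log ((l : ℝ) + 1) := by linarith
    have hD : (0 : ℝ) < (2 / π) * Real.log ((l : ℝ) + 1) := by positivity
    rw [div_le_iff₀ hD]
    have e : (1 + (2 + Real.log 2) / Real.log ((l : ℝ) + 1)) *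
        ((2 / π) * Real.log ((l : ℝ) + 1)) =
        (2 / π) * Real.log ((l : ℝ) + 1) + (4 / π + (2 / π) * Real.log 2) := by
      field_simp
      ring
    linarith
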